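/- Let H be a Hopf algebra over ℂ with universal R-matrix R. Then J := R₂₁·R is a Drinfeld twist of H: J is invertible, satisfies (ε⊗id)(J) = 1 = (id⊗ε)(J), and satisfies the cocycle identity (J⊗1)·(Δ⊗id)(J) = (1⊗J)·(id⊗Δ)(J) in H⊗H⊗H. -/

import Mathlib

open scoped TensorProduct

noncomputable section

section HopfMaps
variable (H : Type*) [Ring H] [HopfAlgebra ℂ H]

/-- The flip `x ⊗ y ↦ y ⊗ x` on `H ⊗ H`. -/
def flip2 : (H ⊗[ℂ] H) →ₐ[ℂ] H ⊗[ℂ] H := (Algebra.TensorProduct.comm ℂ H H).toAlgHom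

/-- The insertion `X ↦ X₁₂` of `H⊗H` into `H⊗H⊗H`. -/
def ins12 : (H ⊗[ℂ] H) →ₐ[ℂ] H ⊗[ℂ] (H ⊗[ℂ] H) :=
  Algebra.TensorProduct.map (AlgHom.id ℂ H) Algebra.TensorProduct.includeLeft

/-- The insertion `X ↦ X₁₃`. -/
def ins13 : (H ⊗[ℂ] H) →ₐ[ℂ] H ⊗[ℂ] (H ⊗[ℂ] H) :=
  Algebra.TensorProduct.map (AlgHom.id ℂ H) Algebra.TensorProduct.includeRight

/-- The insertion `X ↦ X₂₃`. -/
def ins23 : (H ⊗[ℂ] H) →ₐ[ℂ] H ⊗[ℂ] (H ⊗[ℂ] H) := Algebra.TensorProduct.includeRight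

/-- `f ⊗ id : H⊗H → H⊗(H⊗H)` for `f : H → H⊗H` (e.g. `Δ⊗id`). -/
def tens1 (f : H →ₐ[ℂ] H ⊗[ℂ] H) : (H ⊗[ℂ] H) →ₐ[ℂ] H ⊗[ℂ] (H ⊗[ℂ] H) :=
  (Algebra.TensorProduct.assoc ℂ ℂ ℂ H H H).toAlgHom.comp
    (Algebra.TensorProduct.map f (AlgHom.id ℂ H))

/-- `id ⊗ f : H⊗H → H⊗(H⊗H)` for `f : H → H⊗H` (e.g. `id⊗Δ`). -/
def tens2 (f : H →ₐ[ℂ] H ⊗[ℂ] H) : (H ⊗[ℂ] H) →ₐ[ℂ] H ⊗[ℂ] (H ⊗[ℂ] H) :=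
  Algebra.TensorProduct.map (AlgHom.id ℂ H) f

/-- `ψ ⊗ ψ` for an algebra automorphism `ψ` of `H`. -/
def psipsi (ψ : H ≃ₐ[ℂ] H) : (H ⊗[ℂ] H) →ₐ[ℂ] H ⊗[ℂ] H :=
  Algebra.TensorProduct.map ψ.toAlgHom ψ.toAlgHom

/-- `Δ^ψ = (ψ⊗ψ)∘Δ∘ψ⁻¹`. -/
def Dpsi (ψ : H ≃ₐ[ℂ] H) : H →ₐ[ℂ] H ⊗[ℂ] H :=
  ((psipsi H ψ).comp (Bialgebra.comulAlgHom ℂ H)).comp ψ.symm.toAlgHom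

/-- `Δ^{op,ψ} = (ψ⊗ψ)∘Δ^{op}∘ψ⁻¹`. -/
def Dopsi (ψ : H ≃ₐ[ℂ] H) : H →ₐ[ℂ] H ⊗[ℂ] H :=
  ((psipsi H ψ).comp ((flip2 H).comp (Bialgebra.comulAlgHom ℂ H))).comp ψ.symm.toAlgHom

/-- `(ε ⊗ id)(X)`, as an element of `H`. -/
def epsid : (H ⊗[ℂ] H) →ₐ[ℂ] H :=
  (Algebra.TensorProduct.lid ℂ H).toAlgHom.comp
    (Algebra.TensorProduct.map (Bialgebra.counitAlgHom ℂ H) (AlgHom.id ℂ H))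

/-- `(id ⊗ ε)(X)`, as an element of `H`. -/
def ideps : (H ⊗[ℂ] H) →ₐ[ℂ] H :=
  (Algebra.TensorProduct.rid ℂ ℂ H).toAlgHom.comp
    (Algebra.TensorProduct.map (AlgHom.id ℂ H) (Bialgebra.counitAlgHom ℂ H))

end HopfMaps

namespace St1Aux
variable (H : Type*) [Ring H] [HopfAlgebra ℂ H]

/-- Slot permutation `(1 2)` on `H⊗(H⊗H)`. -/
def s12 : (H ⊗[ℂ] (H ⊗[ℂ] H)) →ₐ[ℂ] H ⊗[ℂ] (H ⊗[ℂ] H) :=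
  ((Algebra.TensorProduct.assoc ℂ ℂ ℂ H H H).toAlgHom.comp
    (Algebra.TensorProduct.map (Algebra.TensorProduct.comm ℂ H H).toAlgHom (AlgHom.id ℂ H))).comp
    (Algebra.TensorProduct.assoc ℂ ℂ ℂ H H H).symm.toAlgHom

/-- Slot permutation `(2 3)` on `H⊗(H⊗H)`. -/
def s23 : (H ⊗[ℂ] (H ⊗[ℂ] H)) →ₐ[ℂ] H ⊗[ℂ] (H ⊗[ℂ] H) :=
  Algebra.TensorProduct.map (AlgHom.id ℂ H) (Algebra.TensorProduct.comm ℂ H H).toAlgHom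

/-- Slot permutation `a⊗b⊗c ↦ b⊗c⊗a`. -/
def rho : (H ⊗[ℂ] (H ⊗[ℂ] H)) →ₐ[ℂ] H ⊗[ℂ] (H ⊗[ℂ] H) :=
  (Algebra.TensorProduct.assoc ℂ ℂ ℂ H H H).toAlgHom.comp
    (Algebra.TensorProduct.comm ℂ H (H ⊗[ℂ] H)).toAlgHom

/-- Slot permutation `a⊗b⊗c ↦ c⊗a⊗b`. -/
def tau : (H ⊗[ℂ] (H ⊗[ℂ] H)) →ₐ[ℂ] H ⊗[ℂ] (H ⊗[ℂ] H) :=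
  (Algebra.TensorProduct.comm ℂ (H ⊗[ℂ] H) H).toAlgHom.comp
    (Algebra.TensorProduct.assoc ℂ ℂ ℂ H H H).symm.toAlgHom

/-- On the first slot: `ε ⊗ id ⊗ id`, landing in `H⊗H`. -/
def E1 : (H ⊗[ℂ] (H ⊗[ℂ] H)) →ₐ[ℂ] H ⊗[ℂ] H :=
  (Algebra.TensorProduct.lid ℂ (H ⊗[ℂ] H)).toAlgHom.comp
    (Algebra.TensorProduct.map (Bialgebra.counitAlgHom ℂ H) (AlgHom.id ℂ (H ⊗[ℂ] H)))

/-- On the last slot: `id ⊗ id ⊗ ε`, landing in `H⊗H`. -/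
def E3 : (H ⊗[ℂ] (H ⊗[ℂ] H)) →ₐ[ℂ] H ⊗[ℂ] H :=
  Algebra.TensorProduct.map (AlgHom.id ℂ H) (ideps H)

variable {H}

theorem s12_tmul (a b c : H) : s12 H (a ⊗ₜ (b ⊗ₜ c)) = b ⊗ₜ (a ⊗ₜ c) := by simp [s12]
theorem s23_tmul (a b c : H) : s23 H (a ⊗ₜ (b ⊗ₜ c)) = a ⊗ₜ (c ⊗ₜ b) := by simp [s23]
theorem rho_tmul (a b c : H) : rho H (a ⊗ₜ (b ⊗ₜ c)) = b ⊗ₜ (c ⊗ₜ a) := by simp [rho]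
theorem tau_tmul (a b c : H) : tau H (a ⊗ₜ (b ⊗ₜ c)) = c ⊗ₜ (a ⊗ₜ b) := by simp [tau]

theorem flip2_tmul (a b : H) : flip2 H (a ⊗ₜ b) = b ⊗ₜ a := by simp [flip2]
theorem ins12_tmul (a b : H) : ins12 H (a ⊗ₜ b) = a ⊗ₜ (b ⊗ₜ (1:H)) := by simp [ins12]
theorem ins13_tmul (a b : H) : ins13 H (a ⊗ₜ b) = a ⊗ₜ ((1:H) ⊗ₜ b) := by simp [ins13]
theorem ins23_tmul (a b : H) : ins23 H (a ⊗ₜ b) = (1:H) ⊗ₜ (a ⊗ₜ b) := by simp [ins23]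
theorem ins23_apply (X : H ⊗[ℂ] H) : ins23 H X = (1:H) ⊗ₜ X := by simp [ins23]
theorem tens2_tmul (f : H →ₐ[ℂ] H ⊗[ℂ] H) (a b : H) : tens2 H f (a ⊗ₜ b) = a ⊗ₜ f b := by
  simp [tens2]
theorem tens1_tmul (f : H →ₐ[ℂ] H ⊗[ℂ] H) (a b : H) :
    tens1 H f (a ⊗ₜ b) = (Algebra.TensorProduct.assoc ℂ ℂ ℂ H H H) (f a ⊗ₜ b) := by simp [tens1]
theorem epsid_tmul (a b : H) : epsid H (a ⊗ₜ b) = (Coalgebra.counit a : ℂ) • b := by simp [epsid]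
theorem ideps_tmul (a b : H) : ideps H (a ⊗ₜ b) = (Coalgebra.counit b : ℂ) • a := by simp [ideps]

theorem flip2_flip2 (X : H ⊗[ℂ] H) : flip2 H (flip2 H X) = X := by
  induction X using TensorProduct.induction_on with
  | zero => simp
  | tmul a b => rw [flip2_tmul, flip2_tmul]
  | add u v hu hv => simp [map_add, hu, hv]

theorem epsid_flip2 (X : H ⊗[ℂ] H) : epsid H (flip2 H X) = ideps H X := by
  induction X using TensorProduct.induction_on with
  | zero => simp
  | tmul a b => rw [flip2_tmul, epsid_tmul, ideps_tmul]
  | add u v hu hv => simp [map_add, hu, hv]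

theorem ideps_flip2 (X : H ⊗[ℂ] H) : ideps H (flip2 H X) = epsid H X := by
  induction X using TensorProduct.induction_on with
  | zero => simp
  | tmul a b => rw [flip2_tmul, ideps_tmul, epsid_tmul]
  | add u v hu hv => simp [map_add, hu, hv]

theorem epsid_comul (x : H) : epsid H (Bialgebra.comulAlgHom ℂ H x) = x := by
  have key : ∀ y : H ⊗[ℂ] H,
      (Algebra.TensorProduct.map (Bialgebra.counitAlgHom ℂ H) (AlgHom.id ℂ H)) y =
        LinearMap.rTensor H (Coalgebra.counit (R := ℂ) (A := H)) y := by
    intro y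
    induction y using TensorProduct.induction_on with
    | zero => simp
    | tmul a b => simp
    | add u v hu hv => simp [map_add, hu, hv]
  simp only [epsid, AlgHom.coe_comp, AlgEquiv.toAlgHom_eq_coe, AlgHom.coe_coe,
    Function.comp_apply, Bialgebra.comulAlgHom_apply, key,
    Coalgebra.rTensor_counit_comul]
  simp

theorem ideps_comul (x : H) : ideps H (Bialgebra.comulAlgHom ℂ H x) = x := by
  have key : ∀ y : H ⊗[ℂ] H,
      (Algebra.TensorProduct.map (AlgHom.id ℂ H) (Bialgebra.counitAlgHom ℂ H)) y =
        LinearMap.lTensor H (Coalgebra.counit (R := ℂ) (A := H)) y := by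
    intro y
    induction y using TensorProduct.induction_on with
    | zero => simp
    | tmul a b => simp
    | add u v hu hv => simp [map_add, hu, hv]
  simp only [ideps, AlgHom.coe_comp, AlgEquiv.toAlgHom_eq_coe, AlgHom.coe_coe,
    Function.comp_apply, Bialgebra.comulAlgHom_apply, key,
    Coalgebra.lTensor_counit_comul]
  simp

/- permutations vs insertions -/
theorem s12_ins13 (X : H ⊗[ℂ] H) : s12 H (ins13 H X) = ins23 H X := by
  induction X using TensorProduct.induction_on with
  | zero => simp
  | tmul a b => rw [ins13_tmul, s12_tmul, ins23_tmul]
  | add u v hu hv => simp [map_add, hu, hv]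
theorem s12_ins23 (X : H ⊗[ℂ] H) : s12 H (ins23 H X) = ins13 H X := by
  induction X using TensorProduct.induction_on with
  | zero => simp
  | tmul a b => rw [ins23_tmul, s12_tmul, ins13_tmul]
  | add u v hu hv => simp [map_add, hu, hv]
theorem s23_ins12 (X : H ⊗[ℂ] H) : s23 H (ins12 H X) = ins13 H X := by
  induction X using TensorProduct.induction_on with
  | zero => simp
  | tmul a b => rw [ins12_tmul, s23_tmul, ins13_tmul]
  | add u v hu hv => simp [map_add, hu, hv]
theorem s23_ins13 (X : H ⊗[ℂ] H) : s23 H (ins13 H X) = ins12 H X := by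
  induction X using TensorProduct.induction_on with
  | zero => simp
  | tmul a b => rw [ins13_tmul, s23_tmul, ins12_tmul]
  | add u v hu hv => simp [map_add, hu, hv]
theorem rho_ins13 (X : H ⊗[ℂ] H) : rho H (ins13 H X) = ins23 H (flip2 H X) := by
  induction X using TensorProduct.induction_on with
  | zero => simp
  | tmul a b => rw [ins13_tmul, rho_tmul, flip2_tmul, ins23_tmul]
  | add u v hu hv => simp [map_add, hu, hv]
theorem rho_ins12 (X : H ⊗[ℂ] H) : rho H (ins12 H X) = ins13 H (flip2 H X) := by
  induction X using TensorProduct.induction_on with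
  | zero => simp
  | tmul a b => rw [ins12_tmul, rho_tmul, flip2_tmul, ins13_tmul]
  | add u v hu hv => simp [map_add, hu, hv]
theorem tau_ins13 (X : H ⊗[ℂ] H) : tau H (ins13 H X) = ins12 H (flip2 H X) := by
  induction X using TensorProduct.induction_on with
  | zero => simp
  | tmul a b => rw [ins13_tmul, tau_tmul, flip2_tmul, ins12_tmul]
  | add u v hu hv => simp [map_add, hu, hv]
theorem tau_ins23 (X : H ⊗[ℂ] H) : tau H (ins23 H X) = ins13 H (flip2 H X) := by
  induction X using TensorProduct.induction_on with
  | zero => simp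
  | tmul a b => rw [ins23_tmul, tau_tmul, flip2_tmul, ins13_tmul]
  | add u v hu hv => simp [map_add, hu, hv]

/- permutations vs `tens1`/`tens2` -/
theorem s12_assoc (Z : H ⊗[ℂ] H) (y : H) :
    s12 H ((Algebra.TensorProduct.assoc ℂ ℂ ℂ H H H) (Z ⊗ₜ y)) =
      (Algebra.TensorProduct.assoc ℂ ℂ ℂ H H H) (flip2 H Z ⊗ₜ y) := by
  induction Z using TensorProduct.induction_on with
  | zero => simp
  | tmul u v => simp [s12_tmul, flip2_tmul]
  | add u v hu hv => simp only [TensorProduct.add_tmul, map_add, hu, hv]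

theorem s12_tens1 (f : H →ₐ[ℂ] H ⊗[ℂ] H) (X : H ⊗[ℂ] H) :
    s12 H (tens1 H f X) = tens1 H ((flip2 H).comp f) X := by
  induction X using TensorProduct.induction_on with
  | zero => simp
  | tmul a b => rw [tens1_tmul, s12_assoc, tens1_tmul]; rfl
  | add u v hu hv => simp [map_add, hu, hv]

theorem s23_tens2 (f : H →ₐ[ℂ] H ⊗[ℂ] H) (X : H ⊗[ℂ] H) :
    s23 H (tens2 H f X) = tens2 H ((flip2 H).comp f) X := by
  induction X using TensorProduct.induction_on with
  | zero => simp
  | tmul a b =>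
      rw [tens2_tmul, tens2_tmul]
      show _ = a ⊗ₜ (flip2 H (f b))
      induction f b using TensorProduct.induction_on with
      | zero => simp
      | tmul u v => simp [s23_tmul, flip2_tmul]
      | add u v hu hv => simp only [TensorProduct.tmul_add, map_add, hu, hv]
  | add u v hu hv => simp [map_add, hu, hv]

theorem rho_tens2 (f : H →ₐ[ℂ] H ⊗[ℂ] H) (X : H ⊗[ℂ] H) :
    rho H (tens2 H f X) = tens1 H f (flip2 H X) := by
  induction X using TensorProduct.induction_on with
  | zero => simp
  | tmul a b =>
      rw [tens2_tmul, flip2_tmul, tens1_tmul]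
      induction f b using TensorProduct.induction_on with
      | zero => simp
      | tmul u v => simp [rho_tmul]
      | add u v hu hv =>
          simp only [TensorProduct.tmul_add, TensorProduct.add_tmul, map_add, hu, hv]
  | add u v hu hv => simp [map_add, hu, hv]

theorem tau_tens1 (f : H →ₐ[ℂ] H ⊗[ℂ] H) (X : H ⊗[ℂ] H) :
    tau H (tens1 H f X) = tens2 H f (flip2 H X) := by
  induction X using TensorProduct.induction_on with
  | zero => simp
  | tmul a b =>
      rw [tens1_tmul, flip2_tmul, tens2_tmul]
      induction f a using TensorProduct.induction_on with
      | zero => simp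
      | tmul u v => simp [tau_tmul]
      | add u v hu hv =>
          simp only [TensorProduct.tmul_add, TensorProduct.add_tmul, map_add, hu, hv]
  | add u v hu hv => simp [map_add, hu, hv]

/- decomposition and commutation lemmas -/
theorem assoc_eq_ins12_mul (Z : H ⊗[ℂ] H) (y : H) :
    (Algebra.TensorProduct.assoc ℂ ℂ ℂ H H H) (Z ⊗ₜ y) =
      ins12 H Z * ((1:H) ⊗ₜ ((1:H) ⊗ₜ y)) := by
  induction Z using TensorProduct.induction_on with
  | zero => simp
  | tmul u v => simp [ins12_tmul, Algebra.TensorProduct.tmul_mul_tmul]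
  | add u v hu hv => simp only [TensorProduct.add_tmul, map_add, hu, hv, add_mul]

theorem ins12_comm_iota3 (Z : H ⊗[ℂ] H) (y : H) :
    ins12 H Z * ((1:H) ⊗ₜ ((1:H) ⊗ₜ y)) = ((1:H) ⊗ₜ ((1:H) ⊗ₜ y)) * ins12 H Z := by
  induction Z using TensorProduct.induction_on with
  | zero => simp
  | tmul u v => simp [ins12_tmul, Algebra.TensorProduct.tmul_mul_tmul]
  | add u v hu hv => simp only [map_add, add_mul, mul_add, hu, hv]

theorem L1 (W : H ⊗[ℂ] H) (f g : H →ₐ[ℂ] H ⊗[ℂ] H)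
    (hW : ∀ x : H, W * f x = g x * W) (y : H ⊗[ℂ] H) :
    ins12 H W * tens1 H f y = tens1 H g y * ins12 H W := by
  induction y using TensorProduct.induction_on with
  | zero => simp
  | tmul x b =>
      rw [tens1_tmul, tens1_tmul, assoc_eq_ins12_mul, assoc_eq_ins12_mul,
        ← mul_assoc, ← map_mul, hW, map_mul, mul_assoc, ins12_comm_iota3, ← mul_assoc]
  | add u v hu hv => simp only [map_add, add_mul, mul_add, hu, hv]

theorem L2 (W : H ⊗[ℂ] H) (f g : H →ₐ[ℂ] H ⊗[ℂ] H)
    (hW : ∀ x : H, W * f x = g x * W) (y : H ⊗[ℂ] H) :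
    ins23 H W * tens2 H f y = tens2 H g y * ins23 H W := by
  induction y using TensorProduct.induction_on with
  | zero => simp
  | tmul x b =>
      rw [tens2_tmul, tens2_tmul, ins23_apply, Algebra.TensorProduct.tmul_mul_tmul,
        Algebra.TensorProduct.tmul_mul_tmul, one_mul, mul_one, hW]
  | add u v hu hv => simp only [map_add, add_mul, mul_add, hu, hv]

/- counit evaluations on `H⊗(H⊗H)` -/
theorem E1_tmul (a : H) (Z : H ⊗[ℂ] H) :
    E1 H (a ⊗ₜ Z) = (Coalgebra.counit a : ℂ) • Z := by simp [E1]

theorem E1_assoc (Z : H ⊗[ℂ] H) (y : H) :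
    E1 H ((Algebra.TensorProduct.assoc ℂ ℂ ℂ H H H) (Z ⊗ₜ y)) = epsid H Z ⊗ₜ y := by
  induction Z using TensorProduct.induction_on with
  | zero => simp
  | tmul u v =>
      rw [Algebra.TensorProduct.assoc_tmul, E1_tmul, epsid_tmul,
        TensorProduct.smul_tmul']
  | add u v hu hv => simp only [TensorProduct.add_tmul, map_add, hu, hv]

theorem E1_tens1 (X : H ⊗[ℂ] H) :
    E1 H (tens1 H (Bialgebra.comulAlgHom ℂ H) X) = X := by
  induction X using TensorProduct.induction_on with
  | zero => simp
  | tmul x y => rw [tens1_tmul, E1_assoc, epsid_comul]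
  | add u v hu hv => simp [map_add, hu, hv]

theorem E1_ins13 (X : H ⊗[ℂ] H) : E1 H (ins13 H X) = (1:H) ⊗ₜ epsid H X := by
  induction X using TensorProduct.induction_on with
  | zero => simp
  | tmul a b =>
      rw [ins13_tmul, E1_tmul, epsid_tmul, TensorProduct.tmul_smul]
  | add u v hu hv => simp [map_add, hu, hv, TensorProduct.tmul_add]

theorem E1_ins23 (X : H ⊗[ℂ] H) : E1 H (ins23 H X) = X := by
  rw [ins23_apply, E1_tmul]
  simp

theorem E3_tmul (a : H) (Z : H ⊗[ℂ] H) : E3 H (a ⊗ₜ Z) = a ⊗ₜ ideps H Z := by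
  simp [E3]

theorem E3_tens2 (X : H ⊗[ℂ] H) :
    E3 H (tens2 H (Bialgebra.comulAlgHom ℂ H) X) = X := by
  induction X using TensorProduct.induction_on with
  | zero => simp
  | tmul x y => rw [tens2_tmul, E3_tmul, ideps_comul]
  | add u v hu hv => simp [map_add, hu, hv]

theorem E3_ins13 (X : H ⊗[ℂ] H) : E3 H (ins13 H X) = ideps H X ⊗ₜ (1:H) := by
  induction X using TensorProduct.induction_on with
  | zero => simp
  | tmul a b =>
      rw [ins13_tmul, E3_tmul, ideps_tmul, ideps_tmul, TensorProduct.tmul_smul,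
        TensorProduct.smul_tmul']
  | add u v hu hv => simp [map_add, hu, hv, TensorProduct.add_tmul]

theorem E3_ins12 (X : H ⊗[ℂ] H) : E3 H (ins12 H X) = X := by
  induction X using TensorProduct.induction_on with
  | zero => simp
  | tmul a b =>
      rw [ins12_tmul, E3_tmul, ideps_tmul]
      simp
  | add u v hu hv => simp [map_add, hu, hv]

theorem epsid_one_tmul (u : H) : epsid H ((1:H) ⊗ₜ u) = u := by
  rw [epsid_tmul]; simp

theorem ideps_tmul_one (u : H) : ideps H (u ⊗ₜ (1:H)) = u := by
  rw [ideps_tmul]; simp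

/-- The key noncommutative-ring computation behind the cocycle identity. -/
theorem key {M : Type*} [Ring M] (A B C D E F : M)
    (h1 : B * (C * E) = E * (C * B)) (h2 : A * (E * C) = C * (E * A))
    (h3 : B * (F * D) = D * (F * B)) (h4 : D * (A * E) = E * (A * D)) :
    (A * B) * ((C * E) * (F * D)) = (C * D) * ((A * E) * (F * B)) := by
  calc (A * B) * ((C * E) * (F * D))
      = A * (B * (C * E)) * (F * D) := by noncomm_ring
    _ = A * (E * (C * B)) * (F * D) := by rw [h1]
    _ = (A * (E * C)) * (B * (F * D)) := by noncomm_ring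
    _ = (C * (E * A)) * (D * (F * B)) := by rw [h2, h3]
    _ = C * ((E * (A * D)) * (F * B)) := by noncomm_ring
    _ = C * ((D * (A * E)) * (F * B)) := by rw [← h4]
    _ = (C * D) * ((A * E) * (F * B)) := by noncomm_ring

end St1Aux

/-- Let `H` be a Hopf algebra over ℂ with universal R-matrix `R`.  Then
`J := R₂₁ R` is a Drinfeld twist of `H`: `J` is invertible, `(ε⊗id)(J) = 1 = (id⊗ε)(J)`,
and the cocycle identity `(J⊗1)(Δ⊗id)(J) = (1⊗J)(id⊗Δ)(J)` holds in `H⊗H⊗H`. -/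
theorem statement1 {H : Type*} [Ring H] [HopfAlgebra ℂ H]
    (R : H ⊗[ℂ] H) (hRunit : IsUnit R)
    (hR1 : ∀ x : H,
      R * Bialgebra.comulAlgHom ℂ H x = flip2 H (Bialgebra.comulAlgHom ℂ H x) * R)
    (hR2 : tens1 H (Bialgebra.comulAlgHom ℂ H) R = ins13 H R * ins23 H R)
    (hR3 : tens2 H (Bialgebra.comulAlgHom ℂ H) R = ins13 H R * ins12 H R) :
    IsUnit (flip2 H R * R) ∧
    epsid H (flip2 H R * R) = 1 ∧
    ideps H (flip2 H R * R) = 1 ∧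
    ins12 H (flip2 H R * R) * tens1 H (Bialgebra.comulAlgHom ℂ H) (flip2 H R * R) =
      ins23 H (flip2 H R * R) * tens2 H (Bialgebra.comulAlgHom ℂ H) (flip2 H R * R) := by
  open St1Aux in
  set Δc := Bialgebra.comulAlgHom ℂ H with hΔc
  set Δ' := (flip2 H).comp (Bialgebra.comulAlgHom ℂ H) with hΔ'
  set R' := flip2 H R with hR'
  -- counit facts
  have hepsR : epsid H R = 1 := by
    have h := congrArg (E1 H) hR2
    rw [E1_tens1, map_mul, E1_ins13, E1_ins23] at h
    have h1 : ((1:H) ⊗ₜ[ℂ] epsid H R) * R = (1 : H ⊗[ℂ] H) * R := by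
      rw [one_mul, ← h]
    have h2 := hRunit.mul_right_cancel h1
    have := congrArg (epsid H) h2
    rwa [epsid_one_tmul, map_one] at this
  have hidepsR : ideps H R = 1 := by
    have h := congrArg (E3 H) hR3
    rw [E3_tens2, map_mul, E3_ins13, E3_ins12] at h
    have h1 : (ideps H R ⊗ₜ[ℂ] (1:H)) * R = (1 : H ⊗[ℂ] H) * R := by
      rw [one_mul, ← h]
    have h2 := hRunit.mul_right_cancel h1
    have := congrArg (ideps H) h2
    rwa [ideps_tmul_one, map_one] at this
  refine ⟨(hRunit.map (flip2 H)).mul hRunit, ?_, ?_, ?_⟩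
  · rw [map_mul, epsid_flip2, hepsR, hidepsR, mul_one]
  · rw [map_mul, ideps_flip2, hepsR, hidepsR, mul_one]
  -- the cocycle identity
  · -- flipped R1
    have hR1' : ∀ x : H, R' * Δ' x = Δc x * R' := by
      intro x
      have h := congrArg (flip2 H) (hR1 x)
      rw [map_mul, map_mul, flip2_flip2] at h
      exact h
    -- the six slot elements
    set A := ins12 H R' with hA
    set B := ins12 H R with hB
    set C := ins23 H R' with hC
    set D := ins23 H R with hD
    set E := ins13 H R' with hE
    set F := ins13 H R with hF
    -- coproducts of R and R'
    have t1R : tens1 H Δc R = F * D := hR2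
    have t2R : tens2 H Δc R = F * B := hR3
    have t1R' : tens1 H Δc R' = C * E := by
      have h := congrArg (rho H) hR3
      rw [rho_tens2, map_mul, rho_ins13, rho_ins12] at h
      exact h
    have t2R' : tens2 H Δc R' = A * E := by
      have h := congrArg (tau H) hR2
      rw [tau_tens1, map_mul, tau_ins13, tau_ins23] at h
      exact h
    have t1'R : tens1 H Δ' R = D * F := by
      have h := congrArg (s12 H) hR2
      rw [s12_tens1, map_mul, s12_ins13, s12_ins23] at h
      exact h
    have t1'R' : tens1 H Δ' R' = E * C := by
      have h := congrArg (s12 H) t1R'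
      rw [s12_tens1, map_mul, s12_ins23, s12_ins13] at h
      exact h
    have t2'R' : tens2 H Δ' R' = E * A := by
      have h := congrArg (s23 H) t2R'
      rw [s23_tens2, map_mul, s23_ins12, s23_ins13] at h
      exact h
    -- the four exchange relations
    have h1 : B * (C * E) = E * (C * B) := by
      have := L1 R Δc Δ' hR1 R'
      rwa [t1R', t1'R', mul_assoc] at this
    have h2 : A * (E * C) = C * (E * A) := by
      have := L1 R' Δ' Δc hR1' R'
      rwa [t1'R', t1R', mul_assoc] at this
    have h3 : B * (F * D) = D * (F * B) := by
      have := L1 R Δc Δ' hR1 R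
      rwa [t1R, t1'R, mul_assoc] at this
    have h4 : D * (A * E) = E * (A * D) := by
      have := L2 R Δc Δ' hR1 R'
      rwa [t2R', t2'R', mul_assoc] at this
    -- assemble
    rw [map_mul, map_mul, map_mul, map_mul, t1R', t1R, t2R', t2R]
    exact key A B C D E F h1 h2 h3 h4
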